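/- If N > n, then for each k = 0, 1, ..., n, c_{n,N}(k) = 1 + (-1)^{n-k} ∑_{i=0}^{N-(n+1)} C(n+1+i, k) C(n-k+i, n-k), where c_{n,N}(k) = ∑_{m=k}^{n} C(N+1, m+1) C(m, k) (-1)^{m-k}. -/

import Mathlib

open Finset

lemma partial_alt (M : ℕ) : ∀ t : ℕ, ∑ j ∈ range (t+1), (-1:ℝ)^j * ((M+1).choose j : ℝ)
    = (-1)^t * (M.choose t : ℝ) := by
  intro t
  induction t with
  | zero => simp
  | succ t ih =>
    rw [sum_range_succ, ih]
    have h : ((M+1).choose (t+1) : ℝ) = (M.choose t : ℝ) + (M.choose (t+1) : ℝ) := by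
      rw [Nat.choose_succ_succ]; push_cast; ring
    rw [h]; ring

lemma alt_trino (M k t : ℕ) (hkM : k < M) (ht : k + t ≤ M) :
    ∑ j ∈ range (t+1), (-1:ℝ)^j * ((M.choose (k+j) : ℕ) : ℝ) * (((k+j).choose k : ℕ) : ℝ)
      = (M.choose k : ℝ) * ((-1)^t * ((M - k - 1).choose t : ℝ)) := by
  have hrw : ∀ j ∈ range (t+1), (-1:ℝ)^j * ((M.choose (k+j) : ℕ) : ℝ) * (((k+j).choose k : ℕ) : ℝ)
      = (M.choose k : ℝ) * ((-1)^j * (((M-k).choose j : ℕ) : ℝ)) := by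
    intro j hj
    have hj' : j ≤ t := by simpa [Nat.lt_succ_iff] using hj
    have h1 : k + j ≤ M := le_trans (by omega) ht
    have h2 := Nat.choose_mul (n := M) (k := k + j) (s := k) (Nat.le_add_right _ _)
    rw [Nat.add_sub_cancel_left] at h2
    have h3 : (M.choose (k+j) : ℝ) * ((k+j).choose k : ℝ) = (M.choose k : ℝ) * ((M-k).choose j : ℝ) := by
      exact_mod_cast congrArg (Nat.cast (R := ℝ)) h2
    calc (-1:ℝ)^j * (M.choose (k+j) : ℝ) * ((k+j).choose k : ℝ)
        = (-1:ℝ)^j * ((M.choose (k+j) : ℝ) * ((k+j).choose k : ℝ)) := by ring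
      _ = (-1:ℝ)^j * ((M.choose k : ℝ) * ((M-k).choose j : ℝ)) := by rw [h3]
      _ = (M.choose k : ℝ) * ((-1)^j * ((M-k).choose j : ℝ)) := by ring
  rw [sum_congr rfl hrw, ← mul_sum]
  have hMk : M - k - 1 + 1 = M - k := by omega
  have hp := partial_alt (M - k - 1) t
  rw [hMk] at hp
  rw [hp]

lemma full_sum (k : ℕ) : ∀ N : ℕ, k ≤ N →
    ∑ m ∈ Icc k N, ((N + 1).choose (m + 1) : ℝ) * (m.choose k : ℝ) * (-1) ^ (m - k) = 1 := by
  refine Nat.le_induction ?_ ?_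
  · simp
  · intro N hkN ih
    have hsplit : ∀ m ∈ Icc k (N+1),
        ((N + 2).choose (m + 1) : ℝ) * (m.choose k : ℝ) * (-1) ^ (m - k)
        = ((N+1).choose m : ℝ) * (m.choose k : ℝ) * (-1) ^ (m - k)
          + ((N+1).choose (m+1) : ℝ) * (m.choose k : ℝ) * (-1) ^ (m - k) := by
      intro m hm
      have : (N+2).choose (m+1) = (N+1).choose m + (N+1).choose (m+1) := Nat.choose_succ_succ _ _
      rw [this]; push_cast; ring
    have e1 : ∑ m ∈ Icc k (N+1), ((N + 1 + 1).choose (m + 1) : ℝ) * (m.choose k : ℝ) * (-1) ^ (m - k)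
        = (∑ m ∈ Icc k (N+1), ((N+1).choose m : ℝ) * (m.choose k : ℝ) * (-1) ^ (m - k))
          + ∑ m ∈ Icc k (N+1), ((N+1).choose (m+1) : ℝ) * (m.choose k : ℝ) * (-1) ^ (m - k) := by
      rw [← sum_add_distrib]
      exact sum_congr rfl hsplit
    have eA : ∑ m ∈ Icc k (N+1), ((N+1).choose m : ℝ) * (m.choose k : ℝ) * (-1) ^ (m - k) = 0 := by
      have : Icc k (N+1) = Ico k (N+2) := by rw [← Finset.Ico_add_one_right_eq_Icc]; rfl
      rw [this, sum_Ico_eq_sum_range]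
      have hru : N + 2 - k = (N + 1 - k) + 1 := by omega
      rw [hru]
      have : ∀ j ∈ range (N + 1 - k + 1),
          ((N+1).choose (k+j) : ℝ) * ((k+j).choose k : ℝ) * (-1) ^ (k + j - k)
          = (-1:ℝ)^j * ((N+1).choose (k+j) : ℝ) * ((k+j).choose k : ℝ) := by
        intro j _; rw [Nat.add_sub_cancel_left]; ring
      rw [sum_congr rfl this, alt_trino (N+1) k (N+1-k) (by omega) (by omega)]
      have : (N + 1 - k - 1).choose (N + 1 - k) = 0 := Nat.choose_eq_zero_of_lt (by omega)
      rw [this]; simp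
    have eB : ∑ m ∈ Icc k (N+1), ((N+1).choose (m+1) : ℝ) * (m.choose k : ℝ) * (-1) ^ (m - k) = 1 := by
      rw [← Finset.Ico_add_one_right_eq_Icc, Finset.sum_Ico_succ_top (by omega), Finset.Ico_add_one_right_eq_Icc, ih]
      simp [Nat.choose_eq_zero_of_lt (show N + 2 > N + 1 by omega)]
    rw [e1, eA, eB, zero_add]

theorem c_coeff_alternating (n N k : ℕ) (hN : n < N) (hk : k ≤ n) :
    ∑ m ∈ Icc k n, ((N + 1).choose (m + 1) : ℝ) * (m.choose k : ℝ) * (-1) ^ (m - k)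
      = 1 + (-1 : ℝ) ^ (n - k) *
        ∑ i ∈ range (N - n), ((n + 1 + i).choose k : ℝ) * ((n - k + i).choose (n - k) : ℝ) := by
  induction N, hN using Nat.le_induction with
  | base =>
    have hfull := full_sum k (n+1) (by omega)
    rw [← Finset.Ico_add_one_right_eq_Icc, Finset.sum_Ico_succ_top (by omega), Finset.Ico_add_one_right_eq_Icc] at hfull
    have hterm : ((n + 1 + 1).choose (n + 1 + 1) : ℝ) * ((n+1).choose k : ℝ) * (-1) ^ (n + 1 - k)
        = -((-1:ℝ)^(n-k) * ((n+1).choose k : ℝ)) := by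
      rw [Nat.choose_self]
      have : n + 1 - k = (n - k) + 1 := by omega
      rw [this]; push_cast; ring
    rw [hterm] at hfull
    have : n + 1 - n = 1 := by omega
    rw [this]
    simp only [range_one, sum_singleton, Nat.add_zero, Nat.choose_self]
    push_cast
    linarith [hfull]
  | succ N hN ih =>
    have hsplit : ∀ m ∈ Icc k n,
        ((N + 1 + 1).choose (m + 1) : ℝ) * (m.choose k : ℝ) * (-1) ^ (m - k)
        = ((N+1).choose m : ℝ) * (m.choose k : ℝ) * (-1) ^ (m - k)
          + ((N+1).choose (m+1) : ℝ) * (m.choose k : ℝ) * (-1) ^ (m - k) := by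
      intro m hm
      have : (N+2).choose (m+1) = (N+1).choose m + (N+1).choose (m+1) := Nat.choose_succ_succ _ _
      rw [this]; push_cast; ring
    rw [sum_congr rfl hsplit, sum_add_distrib, ih]
    have eA : ∑ m ∈ Icc k n, ((N+1).choose m : ℝ) * (m.choose k : ℝ) * (-1) ^ (m - k)
        = (-1:ℝ)^(n-k) * (((N+1).choose k : ℝ) * ((N-k).choose (n-k) : ℝ)) := by
      have h1 : Icc k n = Ico k (n+1) := by rw [Finset.Ico_add_one_right_eq_Icc]
      rw [h1, sum_Ico_eq_sum_range]
      have hru : n + 1 - k = (n - k) + 1 := by omega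
      rw [hru]
      have : ∀ j ∈ range (n - k + 1),
          ((N+1).choose (k+j) : ℝ) * ((k+j).choose k : ℝ) * (-1) ^ (k + j - k)
          = (-1:ℝ)^j * ((N+1).choose (k+j) : ℝ) * ((k+j).choose k : ℝ) := by
        intro j _; rw [Nat.add_sub_cancel_left]; ring
      rw [sum_congr rfl this, alt_trino (N+1) k (n-k) (by omega) (by omega)]
      have : N + 1 - k - 1 = N - k := by omega
      rw [this]; ring
    rw [eA]
    have hru2 : N + 1 - n = (N - n) + 1 := by omega
    rw [hru2, sum_range_succ]
    have e2 : n + 1 + (N - n) = N + 1 := by omega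
    have e3 : n - k + (N - n) = N - k := by omega
    have e4 : ((N-k).choose (n-k) : ℝ) = ((n - k + (N - n)).choose (n-k) : ℝ) := by rw [e3]
    rw [e2, e4]
    ring
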